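/- Let E₁,...,E_m be nonempty compact subsets of ℝ such that Eᵢ is a union of at most (Nᵢ+1) discrete sets. Then there exists a positive integer K, depending only on m and N₁,...,N_m, such that for every linear map v : ℝ^m → ℝ with real coefficients, the image v(E₁ × ⋯ × E_m) is compact and a union of at most K discrete subsets of ℝ. -/

import Mathlib

/-- A subset `S` of a topological space is discrete if every point of `S` has an
open neighborhood meeting `S` only in that point. -/
def IsDiscreteIn {T : Type*} [TopologicalSpace T] (S : Set T) : Prop :=
  ∀ x ∈ S, ∃ U : Set T, IsOpen U ∧ U ∩ S = {x}

open Pointwise Filter Topology Set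

section Aux

/-- The relative (Cantor–Bendixson) derived set. -/
def relD (S : Set ℝ) : Set ℝ := S ∩ derivedSet S

lemma mem_derivedSet' {A : Set ℝ} {x : ℝ} : x ∈ derivedSet A ↔ x ∈ closure (A \ {x}) := by
  rw [mem_derivedSet, accPt_principal_iff_clusterPt, mem_closure_iff_clusterPt]

lemma relD_subset (S : Set ℝ) : relD S ⊆ S := Set.inter_subset_left

lemma relD_mono {S T : Set ℝ} (h : S ⊆ T) : relD S ⊆ relD T :=
  Set.inter_subset_inter h (derivedSet_mono _ _ h)

lemma relD_iter_subset (S : Set ℝ) (n : ℕ) : relD^[n] S ⊆ S := by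
  induction n with
  | zero => rfl
  | succ n ih =>
    rw [Function.iterate_succ_apply']
    exact (relD_subset _).trans ih

lemma inter_open_derivedSet {W : Set ℝ} (hW : IsOpen W) (S : Set ℝ) :
    W ∩ derivedSet S ⊆ derivedSet (W ∩ S) := by
  rintro x ⟨hxW, hxD⟩
  rw [mem_derivedSet, accPt_iff_nhds] at hxD ⊢
  intro U hU
  obtain ⟨y, ⟨hyU, hyS⟩, hyx⟩ := hxD (U ∩ W) (Filter.inter_mem hU (hW.mem_nhds hxW))
  exact ⟨y, ⟨hyU.1, hyU.2, hyS⟩, hyx⟩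

lemma inter_open_relD {W : Set ℝ} (hW : IsOpen W) (S : Set ℝ) :
    W ∩ relD S ⊆ relD (W ∩ S) := by
  rintro x ⟨hxW, hxS, hxD⟩
  exact ⟨⟨hxW, hxS⟩, inter_open_derivedSet hW S ⟨hxW, hxD⟩⟩

lemma inter_open_relD_iter {W : Set ℝ} (hW : IsOpen W) (S : Set ℝ) (n : ℕ) :
    W ∩ relD^[n] S ⊆ relD^[n] (W ∩ S) := by
  induction n with
  | zero => exact fun x hx => ⟨hx.1, hx.2⟩
  | succ n ih =>
    rw [Function.iterate_succ_apply', Function.iterate_succ_apply']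
    exact (inter_open_relD hW _).trans (relD_mono ih)

/-- A set covered by `n` discrete sets has empty `n`-th relative derived set. -/
lemma relD_iter_eq_empty_of_discrete_cover :
    ∀ (n : ℕ) (S : Set ℝ) (D : Fin n → Set ℝ), (∀ j, IsDiscreteIn (D j)) →
      S ⊆ ⋃ j, D j → relD^[n] S = ∅ := by
  intro n
  induction n with
  | zero =>
    intro S D _ hcov
    simp only [Set.iUnion_of_empty] at hcov
    exact Set.eq_empty_of_subset_empty hcov
  | succ n ih =>
    intro S D hdisc hcov
    by_contra h
    obtain ⟨x, hx⟩ := Set.nonempty_iff_ne_empty.mpr h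
    rw [Function.iterate_succ_apply'] at hx
    obtain ⟨hx1, hx2⟩ := hx
    have hxS : x ∈ S := relD_iter_subset S n hx1
    obtain ⟨j, hj⟩ := Set.mem_iUnion.mp (hcov hxS)
    obtain ⟨U, hUopen, hUD⟩ := hdisc j x hj
    have hxU : x ∈ U := by
      have : x ∈ U ∩ D j := hUD ▸ rfl
      exact this.1
    set W : Set ℝ := U \ {x} with hWdef
    have hWopen : IsOpen W := hUopen.sdiff isClosed_singleton
    rw [mem_derivedSet'] at hx2
    have hUnhd : U ∈ 𝓝 x := hUopen.mem_nhds hxU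
    obtain ⟨y, hyU, hy1, hy2⟩ := mem_closure_iff_nhds.mp hx2 U hUnhd
    have hyW : y ∈ W := ⟨hyU, hy2⟩
    have hymem : y ∈ relD^[n] (W ∩ S) :=
      inter_open_relD_iter hWopen S n ⟨hyW, hy1⟩
    have hempty : relD^[n] (W ∩ S) = ∅ := by
      apply ih (W ∩ S) (fun i => D (j.succAbove i)) (fun i => hdisc _)
      rintro z ⟨hzW, hzS⟩
      obtain ⟨i, hi⟩ := Set.mem_iUnion.mp (hcov hzS)
      have hij : i ≠ j := by
        rintro rfl
        have : z ∈ U ∩ D i := ⟨hzW.1, hi⟩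
        rw [hUD] at this
        exact hzW.2 this
      obtain ⟨k, hk⟩ := Fin.exists_succAbove_eq hij
      exact Set.mem_iUnion.mpr ⟨k, hk ▸ hi⟩
    rw [hempty] at hymem
    exact hymem

/-- Conversely, empty `n`-th relative derived set yields a cover by `n` discrete sets. -/
lemma discrete_cover_of_relD_iter_eq_empty (n : ℕ) (S : Set ℝ) (h : relD^[n] S = ∅) :
    ∃ D : Fin n → Set ℝ, (∀ j, IsDiscreteIn (D j)) ∧ S = ⋃ j, D j := by
  refine ⟨fun k => relD^[(k : ℕ)] S \ relD^[(k : ℕ) + 1] S, fun k => ?_, ?_⟩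
  · intro x hx
    obtain ⟨hx1, hx2⟩ := hx
    rw [Function.iterate_succ_apply'] at hx2
    have hxD : x ∉ derivedSet (relD^[(k : ℕ)] S) := fun hc => hx2 ⟨hx1, hc⟩
    rw [mem_derivedSet'] at hxD
    refine ⟨(closure (relD^[(k : ℕ)] S \ {x}))ᶜ, isClosed_closure.isOpen_compl, ?_⟩
    apply Set.Subset.antisymm
    · rintro y ⟨hyU, hy1, _⟩
      by_contra hyx
      exact hyU (subset_closure ⟨hy1, hyx⟩)
    · rintro y rfl
      refine ⟨hxD, hx1, ?_⟩
      rw [Function.iterate_succ_apply']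
      exact hx2
  · apply Set.Subset.antisymm
    · intro x hxS
      have hfin : ∃ m, x ∉ relD^[m] S := ⟨n, h ▸ Set.notMem_empty x⟩
      classical
      set m₀ := Nat.find hfin with hm₀
      have hm₀pos : m₀ ≠ 0 := by
        intro hc
        have := Nat.find_spec hfin
        rw [← hm₀, hc] at this
        exact this hxS
      have hm₀le : m₀ ≤ n := Nat.find_le (h ▸ Set.notMem_empty x)
      obtain ⟨k, hk⟩ := Nat.exists_eq_succ_of_ne_zero hm₀pos
      have hkn : k < n := by omega
      refine Set.mem_iUnion.mpr ⟨⟨k, hkn⟩, ?_, ?_⟩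
      · have : ¬ x ∉ relD^[k] S := Nat.find_min hfin (by omega)
        simpa using this
      · have := Nat.find_spec hfin
        rw [← hm₀, hk] at this
        exact this
    · exact Set.iUnion_subset fun k => (Set.diff_subset).trans (relD_iter_subset S k)

/-- On closed sets, the relative and absolute derived set iterations agree. -/
lemma relD_iter_eq_derivedSet_iter {S : Set ℝ} (hS : IsClosed S) (n : ℕ) :
    relD^[n] S = derivedSet^[n] S ∧ IsClosed (derivedSet^[n] S) := by
  induction n with
  | zero => exact ⟨rfl, hS⟩
  | succ n ih =>
    obtain ⟨heq, hcl⟩ := ih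
    rw [Function.iterate_succ_apply', Function.iterate_succ_apply', heq]
    constructor
    · have hsub : derivedSet (derivedSet^[n] S) ⊆ derivedSet^[n] S :=
        (isClosed_iff_derivedSet_subset _).mp hcl
      exact Set.inter_eq_self_of_subset_right hsub ▸ rfl
    · exact isClosed_derivedSet _

lemma derivedSet_empty' : derivedSet (∅ : Set ℝ) = ∅ :=
  Set.eq_empty_of_subset_empty ((derivedSet_subset_closure _).trans (by simp))

lemma derivedSet_singleton' (a : ℝ) : derivedSet ({a} : Set ℝ) = ∅ := by
  ext x
  simp only [mem_derivedSet', Set.mem_empty_iff_false, iff_false]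
  rcases eq_or_ne x a with rfl | hxa
  · simp
  · intro h
    have : ({a} : Set ℝ) \ {x} ⊆ {a} := Set.diff_subset
    have := (closure_mono this) h
    rw [closure_singleton] at this
    exact hxa this

/-- Key analytic step: derived set of a sum of a compact and a closed set. -/
lemma derivedSet_add_subset {A B : Set ℝ} (hA : IsCompact A) (hB : IsClosed B) :
    derivedSet (A + B) ⊆ (derivedSet A + B) ∪ (A + derivedSet B) := by
  intro x hx
  rw [mem_derivedSet'] at hx
  obtain ⟨u, hu, hulim⟩ := mem_closure_iff_seq_limit.mp hx
  choose a ha b hb hab using fun n => (Set.mem_add.mp (hu n).1)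
  obtain ⟨l, hlA, φ, hφ, hφlim⟩ := hA.tendsto_subseq ha
  have hblim : Tendsto (fun n => b (φ n)) atTop (𝓝 (x - l)) := by
    have : (fun n => b (φ n)) = fun n => u (φ n) - a (φ n) := by
      funext n; rw [← hab (φ n)]; ring
    rw [this]
    exact (hulim.comp hφ.tendsto_atTop).sub hφlim
  have hxlB : x - l ∈ B := hB.mem_of_tendsto hblim (Filter.Eventually.of_forall fun n => hb _)
  have hxl : x = l + (x - l) := by ring
  rw [hxl]
  by_cases hc : ∃ᶠ n in atTop, a (φ n) ≠ l
  · obtain ⟨ψ, hψ, hψne⟩ := Filter.extraction_of_frequently_atTop hc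
    left
    refine Set.add_mem_add ?_ hxlB
    rw [mem_derivedSet']
    exact mem_closure_iff_seq_limit.mpr ⟨fun n => a (φ (ψ n)),
      fun n => ⟨ha _, hψne n⟩, hφlim.comp hψ.tendsto_atTop⟩
  · rw [Filter.not_frequently] at hc
    simp only [not_ne_iff] at hc
    obtain ⟨N, hN⟩ := Filter.eventually_atTop.mp hc
    right
    refine Set.add_mem_add hlA ?_
    rw [mem_derivedSet']
    refine mem_closure_iff_seq_limit.mpr ⟨fun n => b (φ (n + N)), fun n => ⟨hb _, ?_⟩, ?_⟩
    · intro hbe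
      simp only [Set.mem_singleton_iff] at hbe
      have haN : a (φ (n + N)) = l := hN (n + N) (by omega)
      have : u (φ (n + N)) = x := by
        rw [← hab (φ (n + N)), haN]
        show l + b (φ (n + N)) = x
        rw [hbe]; ring
      exact (hu (φ (n + N))).2 this
    · exact hblim.comp (tendsto_add_atTop_nat N)

lemma derivedSet_iter_empty (n : ℕ) : derivedSet^[n] (∅ : Set ℝ) = ∅ := by
  induction n with
  | zero => rfl
  | succ n ih => rw [Function.iterate_succ_apply', ih, derivedSet_empty']

lemma derivedSet_iter_mono {S T : Set ℝ} (h : S ⊆ T) (n : ℕ) :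
    derivedSet^[n] S ⊆ derivedSet^[n] T := by
  induction n with
  | zero => exact h
  | succ n ih =>
    rw [Function.iterate_succ_apply', Function.iterate_succ_apply']
    exact derivedSet_mono _ _ ih

lemma relD_iter_subset_derivedSet_iter (S : Set ℝ) (n : ℕ) :
    relD^[n] S ⊆ derivedSet^[n] S := by
  induction n with
  | zero => exact subset_rfl
  | succ n ih =>
    rw [Function.iterate_succ_apply', Function.iterate_succ_apply']
    exact Set.inter_subset_right.trans (derivedSet_mono _ _ ih)

lemma derivedSet_iter_eq_empty_mono {S : Set ℝ} {a b : ℕ} (hab : a ≤ b)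
    (h : derivedSet^[a] S = ∅) : derivedSet^[b] S = ∅ := by
  obtain ⟨c, rfl⟩ := Nat.exists_eq_add_of_le hab
  rw [Nat.add_comm, Function.iterate_add_apply, h, derivedSet_iter_empty]

lemma isCompact_derivedSet {A : Set ℝ} (hA : IsCompact A) : IsCompact (derivedSet A) :=
  hA.of_isClosed_subset (isClosed_derivedSet A)
    ((derivedSet_subset_closure A).trans hA.isClosed.closure_subset)

/-- Cantor–Bendixson rank is subadditive for sums of compact sets. -/
lemma rank_add : ∀ (c a b : ℕ) (A B : Set ℝ), a + b ≤ c → IsCompact A → IsCompact B →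
    derivedSet^[a] A = ∅ → derivedSet^[b] B = ∅ → derivedSet^[a + b] (A + B) = ∅ := by
  intro c
  induction c with
  | zero =>
    intro a b A B hab hA hB ha hb
    have : a = 0 := by omega
    subst this
    have : A = ∅ := ha
    rw [this, Set.empty_add]
    exact derivedSet_iter_empty _
  | succ c ih =>
    intro a b A B hab hA hB ha hb
    rcases Nat.eq_zero_or_pos a with rfl | hapos
    · have : A = ∅ := ha
      rw [this, Set.empty_add]
      exact derivedSet_iter_empty _
    rcases Nat.eq_zero_or_pos b with rfl | hbpos
    · have : B = ∅ := hb
      rw [this, Set.add_empty]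
      exact derivedSet_iter_empty _
    have hstep : derivedSet^[a + b] (A + B)
        ⊆ derivedSet^[a + b - 1] ((derivedSet A + B) ∪ (A + derivedSet B)) := by
      have h1 : a + b = (a + b - 1) + 1 := by omega
      rw [h1, Function.iterate_succ_apply]
      exact derivedSet_iter_mono (derivedSet_add_subset hA hB.isClosed) _
    have hcup : derivedSet^[a + b - 1] ((derivedSet A + B) ∪ (A + derivedSet B))
        ⊆ derivedSet^[a + b - 1] (derivedSet A + B)
          ∪ derivedSet^[a + b - 1] (A + derivedSet B) := by
      generalize (a + b - 1) = k
      induction k with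
      | zero => exact fun x hx => hx
      | succ k ihk =>
        rw [Function.iterate_succ_apply', Function.iterate_succ_apply',
          Function.iterate_succ_apply']
        refine (derivedSet_mono _ _ ihk).trans ?_
        rw [derivedSet_union]
    have h1 : derivedSet^[(a - 1) + b] (derivedSet A + B) = ∅ := by
      apply ih (a - 1) b (derivedSet A) B (by omega) (isCompact_derivedSet hA) hB
      · show derivedSet^[a - 1 + 1] A = ∅
        have : a - 1 + 1 = a := by omega
        rw [this]; exact ha
      · exact hb
    have h2 : derivedSet^[a + (b - 1)] (A + derivedSet B) = ∅ := by
      apply ih a (b - 1) A (derivedSet B) (by omega) hA (isCompact_derivedSet hB)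
      · exact ha
      · show derivedSet^[b - 1 + 1] B = ∅
        have : b - 1 + 1 = b := by omega
        rw [this]; exact hb
    apply Set.eq_empty_of_subset_empty
    refine hstep.trans (hcup.trans ?_)
    rw [derivedSet_iter_eq_empty_mono (show (a-1)+b ≤ a+b-1 by omega) h1,
      derivedSet_iter_eq_empty_mono (show a+(b-1) ≤ a+b-1 by omega) h2]
    simp

lemma rank_smul (c : ℝ) {E : Set ℝ} (hE : E.Nonempty) {n : ℕ} (hn : 1 ≤ n)
    (h : derivedSet^[n] E = ∅) : derivedSet^[n] (c • E) = ∅ := by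
  rcases eq_or_ne c 0 with rfl | hc
  · rw [Set.zero_smul_set hE]
    apply derivedSet_iter_eq_empty_mono hn
    show derivedSet^[1] {(0:ℝ)} = ∅
    rw [Function.iterate_one, derivedSet_singleton']
  · have key : ∀ S : Set ℝ, derivedSet (c • S) ⊆ c • derivedSet S := by
      intro S x hx
      have h1 : (c⁻¹ • ·) '' derivedSet (c • S) ⊆ derivedSet ((c⁻¹ • ·) '' (c • S)) :=
        Continuous.image_derivedSet (continuous_const_smul _)
          (fun p q hpq => by exact smul_right_injective ℝ (inv_ne_zero hc) hpq)
      have h2 : (c⁻¹ • ·) '' (c • S) = S := by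
        rw [Set.image_smul, smul_smul, inv_mul_cancel₀ hc, one_smul]
      have : c⁻¹ • x ∈ derivedSet S := by
        rw [← h2]
        exact h1 ⟨x, hx, rfl⟩
      have := Set.smul_mem_smul_set (a := c) this
      rwa [smul_smul, mul_inv_cancel₀ hc, one_smul] at this
    have iter : ∀ k, derivedSet^[k] (c • E) ⊆ c • derivedSet^[k] E := by
      intro k
      induction k with
      | zero => exact fun x hx => hx
      | succ k ihk =>
        rw [Function.iterate_succ_apply', Function.iterate_succ_apply']
        exact (derivedSet_mono _ _ ihk).trans (key _)
    apply Set.eq_empty_of_subset_empty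
    refine (iter n).trans ?_
    rw [h, Set.smul_set_empty]

/-- Embedding of functions on `Fin m` by prepending a zero. -/
def consZero (m : ℕ) : (Fin m → ℝ) →ₗ[ℝ] (Fin (m + 1) → ℝ) where
  toFun g := Fin.cons 0 g
  map_add' g h := by
    funext i
    refine Fin.cases ?_ (fun k => ?_) i <;> simp
  map_smul' c g := by
    funext i
    refine Fin.cases ?_ (fun k => ?_) i <;> simp

lemma cons_decomp (m : ℕ) (a : ℝ) (g : Fin m → ℝ) :
    (Fin.cons a g : Fin (m+1) → ℝ) =
      a • (Pi.single (0 : Fin (m+1)) (1:ℝ) : Fin (m+1) → ℝ) + consZero m g := by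
  funext i
  refine Fin.cases ?_ (fun k => ?_) i
  · simp [consZero]
  · simp [consZero, Pi.single_eq_of_ne (Fin.succ_ne_zero k)]

lemma main_lemma : ∀ (m : ℕ) (E : Fin m → Set ℝ) (r : Fin m → ℕ),
    (∀ i, (E i).Nonempty) → (∀ i, IsCompact (E i)) → (∀ i, 1 ≤ r i) →
    (∀ i, derivedSet^[r i] (E i) = ∅) →
    ∀ v : (Fin m → ℝ) →ₗ[ℝ] ℝ,
      derivedSet^[1 + ∑ i, r i] (v '' Set.univ.pi E) = ∅ := by
  intro m
  induction m with
  | zero =>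
    intro E r hne hcomp hr hrank v
    have himg : v '' Set.univ.pi E = {0} := by
      apply Set.Subset.antisymm
      · rintro x ⟨f, -, rfl⟩
        have : f = 0 := Subsingleton.elim f 0
        rw [this, map_zero]
        rfl
      · rintro x rfl
        exact ⟨0, fun i _ => i.elim0, map_zero v⟩
    rw [himg, Nat.add_comm, Function.iterate_add_apply, Function.iterate_one,
      derivedSet_singleton', derivedSet_iter_empty]
  | succ m ih =>
    intro E r hne hcomp hr hrank v
    set c : ℝ := v (Pi.single 0 1) with hc
    set w : (Fin m → ℝ) →ₗ[ℝ] ℝ := v.comp (consZero m) with hw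
    set E' : Fin m → Set ℝ := fun (i : Fin m) => E i.succ with hE'
    have hval : ∀ (a : ℝ) (g : Fin m → ℝ), v (Fin.cons a g) = c * a + w g := by
      intro a g
      rw [cons_decomp, map_add, map_smul]
      simp [hw, consZero, mul_comm, hc]
    have himg : v '' Set.univ.pi E = (c • E 0) + (w '' Set.univ.pi E') := by
      apply Set.Subset.antisymm
      · rintro x ⟨f, hf, rfl⟩
        have hdecomp : f = Fin.cons (f 0) (Fin.tail f) := (Fin.cons_self_tail f).symm
        rw [Set.mem_add]
        refine ⟨c * f 0, Set.smul_mem_smul_set (hf 0 (Set.mem_univ _)),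
          w (Fin.tail f), ⟨Fin.tail f, fun (i : Fin m) _ => hf i.succ (Set.mem_univ _), rfl⟩, ?_⟩
        conv_rhs => rw [hdecomp, hval]
      · rintro x hx
        rw [Set.mem_add] at hx
        obtain ⟨y, ⟨e, he, rfl⟩, z, ⟨g, hg, rfl⟩, rfl⟩ := hx
        refine ⟨Fin.cons e g, fun i _ => ?_, by rw [hval]; rfl⟩
        refine Fin.cases ?_ (fun k => ?_) i
        · simpa using he
        · simpa using hg k (Set.mem_univ k)
    rw [himg]
    have hA : IsCompact (c • E 0) := by
      rw [← Set.image_smul]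
      exact (hcomp 0).image (continuous_const_smul c)
    have hB : IsCompact (w '' Set.univ.pi E') :=
      (isCompact_univ_pi (fun (i : Fin m) => hcomp i.succ)).image
        w.continuous_of_finiteDimensional
    have hrkA : derivedSet^[r 0] (c • E 0) = ∅ :=
      rank_smul c (hne 0) (hr 0) (hrank 0)
    have hrkB : derivedSet^[1 + ∑ i : Fin m, r i.succ] (w '' Set.univ.pi E') = ∅ :=
      ih E' (fun (i : Fin m) => r i.succ) (fun (i : Fin m) => hne i.succ)
        (fun (i : Fin m) => hcomp i.succ)
        (fun (i : Fin m) => hr i.succ) (fun (i : Fin m) => hrank i.succ) w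
    have hexp : 1 + ∑ i : Fin (m+1), r i = r 0 + (1 + ∑ i : Fin m, r i.succ) := by
      rw [Fin.sum_univ_succ]
      ring
    rw [hexp]
    exact rank_add _ _ _ _ _ le_rfl hA hB hrkA hrkB

end Aux

theorem stmt_4 (m : ℕ) (N : Fin m → ℕ) :
    ∃ K : ℕ, 0 < K ∧
      ∀ E : Fin m → Set ℝ,
        (∀ i, (E i).Nonempty) → (∀ i, IsCompact (E i)) →
        (∀ i, ∃ S : Fin (N i + 1) → Set ℝ,
          (∀ j, IsDiscreteIn (S j)) ∧ E i = ⋃ j, S j) →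
        ∀ v : (Fin m → ℝ) →ₗ[ℝ] ℝ,
          IsCompact (v '' Set.univ.pi E) ∧
          ∃ S : Fin K → Set ℝ, (∀ j, IsDiscreteIn (S j)) ∧
            v '' Set.univ.pi E = ⋃ j, S j := by
  refine ⟨1 + ∑ i, (N i + 1), lt_of_lt_of_le Nat.zero_lt_one (Nat.le_add_right 1 _), ?_⟩
  intro E hne hcomp hdisc v
  refine ⟨(isCompact_univ_pi hcomp).image v.continuous_of_finiteDimensional, ?_⟩
  have hrank : ∀ i, derivedSet^[N i + 1] (E i) = ∅ := by
    intro i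
    obtain ⟨S, hS, hES⟩ := hdisc i
    have h1 : relD^[N i + 1] (E i) = ∅ :=
      relD_iter_eq_empty_of_discrete_cover _ _ S hS (hES ▸ subset_rfl)
    have h2 := (relD_iter_eq_derivedSet_iter (hcomp i).isClosed (N i + 1)).1
    rw [← h2]
    exact h1
  have hmain : derivedSet^[1 + ∑ i, (N i + 1)] (v '' Set.univ.pi E) = ∅ :=
    main_lemma m E (fun i => N i + 1) hne hcomp (fun i => Nat.le_add_left 1 (N i)) hrank v
  have hsub : relD^[1 + ∑ i, (N i + 1)] (v '' Set.univ.pi E) = ∅ :=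
    Set.eq_empty_of_subset_empty
      (hmain ▸ relD_iter_subset_derivedSet_iter (v '' Set.univ.pi E) _)
  exact discrete_cover_of_relD_iter_eq_empty _ _ hsub
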